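/- Let q be a real constant and let f be a C² real function on an open interval I ⊆ (0,∞). If the surface of revolution a = f(ρ) in the affine-additive group has constant symplectic distortion q on I, i.e., 2(2ρ f''(ρ)(2(ρ²+1)f'(ρ) − 1) − 4 f'(ρ)² + 4 f'(ρ) − 1) = q·(4(ρ²+1)f'(ρ)² − 4 f'(ρ) + 1)^{3/2} for all ρ ∈ I, then there exists a constant c₁ ∈ ℝ such that for all ρ ∈ I: ρ/√(4(ρ²+1)f'(ρ)² − 4 f'(ρ) + 1) = c₁ − qρ/2. -/

import Mathlib

/-- First integral of the constant symplectic distortion equation for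
surfaces of revolution `a = f(ρ)` in the affine-additive group. -/
theorem aa_constant_symplectic_distortion
    (q : ℝ) (a b : ℝ) (ha : 0 ≤ a) (f : ℝ → ℝ)
    (hf : ContDiffOn ℝ 2 f (Set.Ioo a b))
    (hQ : ∀ ρ ∈ Set.Ioo a b,
      2 * (2 * ρ * deriv (deriv f) ρ * (2 * (ρ ^ 2 + 1) * deriv f ρ - 1) -
          4 * (deriv f ρ) ^ 2 + 4 * deriv f ρ - 1) =
        q * (4 * (ρ ^ 2 + 1) * (deriv f ρ) ^ 2 - 4 * deriv f ρ + 1) ^ ((3 : ℝ) / 2)) :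
    ∃ c₁ : ℝ, ∀ ρ ∈ Set.Ioo a b,
      ρ / Real.sqrt (4 * (ρ ^ 2 + 1) * (deriv f ρ) ^ 2 - 4 * deriv f ρ + 1) =
        c₁ - q * ρ / 2 := by
  rcases Set.eq_empty_or_nonempty (Set.Ioo a b) with he | ⟨x₀, hx₀⟩
  · exact ⟨0, fun ρ hρ => by rw [he] at hρ; exact absurd hρ (Set.notMem_empty ρ)⟩
  set s := Set.Ioo a b
  set D : ℝ → ℝ := fun ρ => 4 * (ρ ^ 2 + 1) * (deriv f ρ) ^ 2 - 4 * deriv f ρ + 1 with hD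
  set g : ℝ → ℝ := fun ρ => ρ / Real.sqrt (D ρ) + q * ρ / 2 with hg
  -- positivity of D on s
  have hDpos : ∀ x ∈ s, 0 < D x := by
    intro x hx
    have hx0 : 0 < x := lt_of_le_of_lt ha hx.1
    have key : D x = (2 * x * deriv f x) ^ 2 + (2 * deriv f x - 1) ^ 2 := by
      simp only [hD]; ring
    rw [key]
    rcases eq_or_ne (deriv f x) (1/2) with h | h
    · have h2 : (2 * x * deriv f x) ^ 2 > 0 := by rw [h]; positivity
      nlinarith [sq_nonneg (2 * deriv f x - 1)]
    · have h3 : 2 * deriv f x - 1 ≠ 0 := fun hc => h (by linarith)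
      have h2 : (2 * deriv f x - 1) ^ 2 > 0 := by positivity
      nlinarith [sq_nonneg (2 * x * deriv f x)]
  -- differentiability of deriv f on s
  have hdf : ContDiffOn ℝ 1 (deriv f) s :=
    hf.deriv_of_isOpen isOpen_Ioo (by norm_num)
  have hderiv : ∀ x ∈ s, HasDerivAt g 0 x := by
    intro x hx
    have hx0 : 0 < x := lt_of_le_of_lt ha hx.1
    set u := deriv f x
    set u' := deriv (deriv f) x
    have hdfx : HasDerivAt (deriv f) u' x := by
      have : DifferentiableAt ℝ (deriv f) x :=
        (hdf.differentiableOn (by norm_num)).differentiableAt (isOpen_Ioo.mem_nhds hx)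
      exact this.hasDerivAt
    have hDx : HasDerivAt D (8 * x * u ^ 2 + (8 * (x ^ 2 + 1) * u - 4) * u') x := by
      have h1 : HasDerivAt (fun ρ => 4 * (ρ ^ 2 + 1) * (deriv f ρ) ^ 2 - 4 * deriv f ρ + 1)
          ((4 * (2 * x) * u ^ 2 + 4 * (x ^ 2 + 1) * (2 * u * u')) - 4 * u') x := by
        have hsq : HasDerivAt (fun ρ => (deriv f ρ) ^ 2) (2 * u * u') x := by
          have := hdfx.fun_pow 2
          simpa [mul_comm, mul_assoc, mul_left_comm] using this
        have hpoly : HasDerivAt (fun ρ : ℝ => 4 * (ρ ^ 2 + 1)) (4 * (2 * x)) x := by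
          have := ((hasDerivAt_pow 2 x).add_const 1).const_mul (4:ℝ)
          simpa using this
        exact (((hpoly.mul hsq).sub (hdfx.const_mul 4)).add_const 1)
      convert h1 using 1
      ring
    have hDxpos := hDpos x hx
    have hsD : Real.sqrt (D x) > 0 := Real.sqrt_pos.mpr hDxpos
    have hsqrt : HasDerivAt (fun ρ => Real.sqrt (D ρ))
        ((8 * x * u ^ 2 + (8 * (x ^ 2 + 1) * u - 4) * u') / (2 * Real.sqrt (D x))) x := by
      have := (Real.hasDerivAt_sqrt (ne_of_gt hDxpos)).comp x hDx
      simpa [Function.comp_def, mul_comm, div_eq_mul_inv, mul_assoc, mul_left_comm] using this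
    set D' := 8 * x * u ^ 2 + (8 * (x ^ 2 + 1) * u - 4) * u' with hD'
    have hquot : HasDerivAt (fun ρ => ρ / Real.sqrt (D ρ))
        ((1 * Real.sqrt (D x) - x * (D' / (2 * Real.sqrt (D x)))) / (Real.sqrt (D x)) ^ 2) x :=
      (hasDerivAt_id x).div hsqrt (ne_of_gt hsD)
    have hlin : HasDerivAt (fun ρ => q * ρ / 2) (q / 2) x := by
      have := ((hasDerivAt_id x).const_mul q).div_const 2
      simpa using this
    have htot := hquot.add hlin
    -- show the derivative value is 0
    have hs3 : (D x) ^ ((3:ℝ)/2) = (Real.sqrt (D x)) ^ 3 := by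
      rw [Real.sqrt_eq_rpow, ← Real.rpow_natCast ((D x) ^ ((1:ℝ)/2)) 3,
        ← Real.rpow_mul hDxpos.le]
      norm_num
    have hQx := hQ x hx
    have hsq : (Real.sqrt (D x)) ^ 2 = D x := Real.sq_sqrt hDxpos.le
    have hkey : 2 * D x - x * D' = -(q * (Real.sqrt (D x)) ^ 3) := by
      rw [← hs3]
      have : 2 * D x - x * D' =
          -(2 * (2 * x * u' * (2 * (x ^ 2 + 1) * u - 1) - 4 * u ^ 2 + 4 * u - 1)) := by
        simp only [hD, hD']; ring
      rw [this, hQx]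
    have hval : (1 * Real.sqrt (D x) - x * (D' / (2 * Real.sqrt (D x)))) / (Real.sqrt (D x)) ^ 2
        + q / 2 = 0 := by
      have hne : Real.sqrt (D x) ≠ 0 := ne_of_gt hsD
      field_simp
      linear_combination hkey + 2 * hsq
    rw [← hval]
    exact htot
  -- constancy
  have hconst : ∀ x ∈ s, g x = g x₀ := by
    intro x hx
    have hdiff : DifferentiableOn ℝ g s := fun y hy => ((hderiv y hy).differentiableAt).differentiableWithinAt
    apply (convex_Ioo a b).is_const_of_fderivWithin_eq_zero hdiff _ hx hx₀
    intro y hy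
    have h1 : fderivWithin ℝ g s y = fderiv ℝ g y :=
      fderivWithin_of_isOpen isOpen_Ioo hy
    rw [h1, (hderiv y hy).hasFDerivAt.fderiv]
    ext
    simp
  refine ⟨g x₀, fun ρ hρ => ?_⟩
  have h := hconst ρ hρ
  simp only [hg] at h
  show ρ / Real.sqrt (D ρ) = g x₀ - q * ρ / 2
  simp only [hg]
  linarith
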